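/- Let z₁ < z₂ be two consecutive critical points of fᵏ (k ≥ 2), with f(x_c) > x_c. If fᵏ(z₁) − x_c and fᵏ(z₂) − x_c have strictly opposite signs, then there exists a unique z ∈ (z₁, z₂) that is a critical point of f^{k+1}; moreover (f^{k+1})''(z) < 0 and f^{k+1}(z) = f(x_c) > x_c. If instead fᵏ(z₁) − x_c and fᵏ(z₂) − x_c do not have opposite signs, then f^{k+1} has no critical point in (z₁, z₂). -/

import Mathlib

open Set Filter Topology

theorem crit_between_consecutive_crits
    (a b x_c : ℝ) (f : ℝ → ℝ) (hab : a < b)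
    (hmap : Set.MapsTo f (Set.Icc a b) (Set.Icc a b))
    (hf : ContDiff ℝ 2 f)
    (hxc : x_c ∈ Set.Ioo a b)
    (h2 : deriv (deriv f) x_c < 0)
    (hup : ∀ x ∈ Set.Ico a x_c, 0 < deriv f x)
    (hdn : ∀ x ∈ Set.Ioc x_c b, deriv f x < 0)
    (k : ℕ) (hk : 2 ≤ k) (hc : f x_c > x_c)
    (z₁ z₂ : ℝ) (hz₁ : z₁ ∈ Icc a b) (hz₂ : z₂ ∈ Icc a b) (hlt : z₁ < z₂)
    (hc₁ : deriv (f^[k]) z₁ = 0) (hc₂ : deriv (f^[k]) z₂ = 0)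
    (hcons : ∀ x ∈ Ioo z₁ z₂, deriv (f^[k]) x ≠ 0) :
    ((f^[k] z₁ - x_c) * (f^[k] z₂ - x_c) < 0 →
      ∃ z ∈ Ioo z₁ z₂, deriv (f^[k+1]) z = 0 ∧
        deriv (deriv (f^[k+1])) z < 0 ∧ f^[k+1] z = f x_c ∧ f x_c > x_c ∧
        ∀ w ∈ Ioo z₁ z₂, deriv (f^[k+1]) w = 0 → w = z) ∧
    (¬ ((f^[k] z₁ - x_c) * (f^[k] z₂ - x_c) < 0) →
      ∀ w ∈ Ioo z₁ z₂, deriv (f^[k+1]) w ≠ 0) := by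
  -- smoothness facts
  have hfd : Differentiable ℝ f := hf.differentiable (by norm_num)
  have hf2 : ContDiff ℝ ((1:ℕ)+1) f := by exact_mod_cast hf
  have hdf_diff : Differentiable ℝ (deriv f) :=
    ((contDiff_succ_iff_deriv.mp hf2).2.2).differentiable (by norm_num)
  have hfit : ∀ n : ℕ, ContDiff ℝ 2 (f^[n]) := by
    intro n; induction n with
    | zero => simpa using contDiff_id
    | succ n ih => rw [Function.iterate_succ']; exact hf.comp ih
  have hitd : ∀ n : ℕ, Differentiable ℝ (f^[n]) := fun n => (hfit n).differentiable (by norm_num)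
  have hdkd : Differentiable ℝ (deriv (f^[k])) := by
    have h2' : ContDiff ℝ ((1:ℕ)+1) (f^[k]) := by exact_mod_cast hfit k
    exact ((contDiff_succ_iff_deriv.mp h2').2.2).differentiable (by norm_num)
  -- chain rule
  have hchain : ∀ x : ℝ, deriv (f^[k+1]) x = deriv f (f^[k] x) * deriv (f^[k]) x := by
    intro x
    rw [Function.iterate_succ']
    exact deriv_comp x (hfd _) (hitd k x)
  -- deriv f x_c = 0
  have hcd : Continuous (deriv f) := hf.continuous_deriv one_le_two
  have hdxc : deriv f x_c = 0 := by
    have hL : 0 ≤ deriv f x_c := by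
      have ht : Tendsto (deriv f) (𝓝[<] x_c) (𝓝 (deriv f x_c)) :=
        (hcd.continuousAt).tendsto.mono_left nhdsWithin_le_nhds
      refine ge_of_tendsto ht ?_
      filter_upwards [Ioo_mem_nhdsLT hxc.1] with x hx
      exact (hup x ⟨hx.1.le, hx.2⟩).le
    have hR : deriv f x_c ≤ 0 := by
      have ht : Tendsto (deriv f) (𝓝[>] x_c) (𝓝 (deriv f x_c)) :=
        (hcd.continuousAt).tendsto.mono_left nhdsWithin_le_nhds
      refine le_of_tendsto ht ?_
      filter_upwards [Ioo_mem_nhdsGT hxc.2] with x hx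
      exact (hdn x ⟨hx.1, hx.2.le⟩).le
    linarith
  have hdne : ∀ y ∈ Icc a b, y ≠ x_c → deriv f y ≠ 0 := by
    intro y hy hne
    rcases lt_or_gt_of_ne hne with h | h
    · exact ne_of_gt (hup y ⟨hy.1, h⟩)
    · exact ne_of_lt (hdn y ⟨h, hy.2⟩)
  have hmit : ∀ n : ℕ, MapsTo (f^[n]) (Icc a b) (Icc a b) := fun n => hmap.iterate n
  have hsub : Icc z₁ z₂ ⊆ Icc a b := fun w hw => ⟨hz₁.1.trans hw.1, hw.2.trans hz₂.2⟩
  -- key equivalence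
  have hiff : ∀ w ∈ Ioo z₁ z₂, (deriv (f^[k+1]) w = 0 ↔ f^[k] w = x_c) := by
    intro w hw
    rw [hchain w]
    constructor
    · intro h
      rcases mul_eq_zero.mp h with h | h
      · by_contra hne
        exact hdne _ (hmit k (hsub ⟨hw.1.le, hw.2.le⟩)) hne h
      · exact absurd h (hcons w hw)
    · intro h; rw [h, hdxc, zero_mul]
  -- constant sign of deriv f^[k] on (z₁, z₂)
  have hcontd : Continuous (deriv (f^[k])) := (hfit k).continuous_deriv one_le_two
  have hsign : (∀ x ∈ Ioo z₁ z₂, 0 < deriv (f^[k]) x) ∨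
      (∀ x ∈ Ioo z₁ z₂, deriv (f^[k]) x < 0) := by
    by_contra h
    push_neg at h
    obtain ⟨⟨x, hx, hx0⟩, ⟨y, hy, hy0⟩⟩ := h
    have hx0' : deriv (f^[k]) x < 0 := lt_of_le_of_ne hx0 (hcons x hx)
    have hy0' : 0 < deriv (f^[k]) y := lt_of_le_of_ne hy0 (Ne.symm (hcons y hy))
    have hmem : (0:ℝ) ∈ uIcc (deriv (f^[k]) x) (deriv (f^[k]) y) := by
      rw [Set.mem_uIcc]; exact Or.inl ⟨hx0'.le, hy0'.le⟩
    obtain ⟨z, hz, hz0⟩ := intermediate_value_uIcc (hcontd.continuousOn) hmem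
    have hzI : z ∈ Ioo z₁ z₂ := (Set.ordConnected_Ioo.uIcc_subset hx hy) hz
    exact hcons z hzI hz0
  -- monotonicity on [z₁, z₂]
  have hconv : Convex ℝ (Icc z₁ z₂) := convex_Icc _ _
  have hco : ContinuousOn (f^[k]) (Icc z₁ z₂) := ((hfit k).continuous).continuousOn
  have hmono : StrictMonoOn (f^[k]) (Icc z₁ z₂) ∨ StrictAntiOn (f^[k]) (Icc z₁ z₂) := by
    rcases hsign with h | h
    · left
      exact strictMonoOn_of_deriv_pos hconv hco (by rwa [interior_Icc])
    · right
      exact strictAntiOn_of_deriv_neg hconv hco (by rwa [interior_Icc])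
  have hinj : InjOn (f^[k]) (Icc z₁ z₂) := by
    rcases hmono with h | h
    exacts [h.injOn, h.injOn]
  have hz1m : z₁ ∈ Icc z₁ z₂ := left_mem_Icc.mpr hlt.le
  have hz2m : z₂ ∈ Icc z₁ z₂ := right_mem_Icc.mpr hlt.le
  have hbtw : ∀ w ∈ Ioo z₁ z₂,
      (f^[k] z₁ < f^[k] w ∧ f^[k] w < f^[k] z₂) ∨
      (f^[k] z₂ < f^[k] w ∧ f^[k] w < f^[k] z₁) := by
    intro w hw
    have hw1 : w ∈ Icc z₁ z₂ := ⟨hw.1.le, hw.2.le⟩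
    rcases hmono with h | h
    · exact Or.inl ⟨h hz1m hw1 hw.1, h hw1 hz2m hw.2⟩
    · exact Or.inr ⟨h hw1 hz2m hw.2, h hz1m hw1 hw.1⟩
  constructor
  · -- opposite signs case
    intro hprod
    have hz : ∃ z ∈ Ioo z₁ z₂, f^[k] z = x_c := by
      rcases mul_neg_iff.mp hprod with ⟨h1, h2'⟩ | ⟨h1, h2'⟩
      · have hm : x_c ∈ Ioo (f^[k] z₂) (f^[k] z₁) := ⟨by linarith, by linarith⟩
        obtain ⟨z, hz, hz'⟩ := intermediate_value_Ioo' hlt.le hco hm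
        exact ⟨z, hz, hz'⟩
      · have hm : x_c ∈ Ioo (f^[k] z₁) (f^[k] z₂) := ⟨by linarith, by linarith⟩
        obtain ⟨z, hz, hz'⟩ := intermediate_value_Ioo hlt.le hco hm
        exact ⟨z, hz, hz'⟩
    obtain ⟨z, hzIoo, hzval⟩ := hz
    have hdz : deriv (f^[k]) z ≠ 0 := hcons z hzIoo
    refine ⟨z, hzIoo, (hiff z hzIoo).mpr hzval, ?_, ?_, hc, ?_⟩
    · -- second derivative negative
      have hEq : deriv (f^[k+1]) = fun x => deriv f (f^[k] x) * deriv (f^[k]) x :=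
        funext hchain
      rw [hEq]
      have h1d : DifferentiableAt ℝ (fun x => deriv f (f^[k] x)) z :=
        (hdf_diff _).comp z (hitd k z)
      rw [deriv_fun_mul h1d (hdkd z)]
      have h3 : deriv (fun x => deriv f (f^[k] x)) z
          = deriv (deriv f) (f^[k] z) * deriv (f^[k]) z :=
        deriv_comp z (hdf_diff _) (hitd k z)
      rw [h3, hzval, hdxc, zero_mul, add_zero]
      nlinarith [mul_self_pos.mpr hdz]
    · rw [Function.iterate_succ_apply', hzval]
    · intro w hw hwd
      have hwv : f^[k] w = x_c := (hiff w hw).mp hwd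
      exact hinj ⟨hw.1.le, hw.2.le⟩ ⟨hzIoo.1.le, hzIoo.2.le⟩ (hwv.trans hzval.symm)
  · -- no sign change case
    intro hprod w hw hwd
    have hwv : f^[k] w = x_c := (hiff w hw).mp hwd
    rcases hbtw w hw with ⟨h1, h2'⟩ | ⟨h1, h2'⟩ <;> rw [hwv] at h1 h2' <;>
      exact hprod (by nlinarith)
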